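/- arXiv:1903.07490 — 5 statements merged into one kernel-verified Lean document; each statement's English description precedes it below -/
import Mathlib

section
/- Let F(m,n) be defined for natural numbers m,n by the double recurrence F(m,n) = F(m-1,n-1) + F(m-2,n-2) for m,n ≥ 2, with initial conditions F(m,0) = F_m, F(m,1) = F_{m+1}, F(0,n) = F_n, F(1,n) = F_{n+1}, where F_k denotes the k-th Fibonacci number. Then for all m,n ∈ ℕ, setting k = min{m,n}, we have F(m,n) = F_k · F_{|m-n|+2} + F_{k-1} · F_{|m-n|} (where for k = 0 the term F_{k-1}·F_{|m-n|} is interpreted with F_{-1} = 1, equivalently the formula holds for k ≥ 1 and F(m,0) = F_m, F(0,n) = F_n). -/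
/-- Double-recurrence Fibonacci numbers. -/
def dF : ℕ → ℕ → ℕ
  | m, 0 => Nat.fib m
  | m, 1 => Nat.fib (m + 1)
  | 0, n => Nat.fib n
  | 1, n => Nat.fib (n + 1)
  | m + 2, n + 2 => dF (m + 1) (n + 1) + dF m n

lemma dF_zero_right (m : ℕ) : dF m 0 = Nat.fib m := by cases m with
  | zero => rfl
  | succ k => cases k <;> rfl

lemma dF_one_right (m : ℕ) : dF m 1 = Nat.fib (m+1) := by cases m with
  | zero => rfl
  | succ k => cases k <;> rfl

lemma dF_zero_left (n : ℕ) : dF 0 n = Nat.fib n := by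
  match n with
  | 0 => rfl
  | 1 => rfl
  | n+2 => rfl

lemma dF_one_left (n : ℕ) : dF 1 n = Nat.fib (n+1) := by
  match n with
  | 0 => rfl
  | 1 => rfl
  | n+2 => rfl

lemma dF_symm (m n : ℕ) : dF m n = dF n m := by
  induction m using Nat.strong_induction_on generalizing n with
  | _ m ih =>
  match m, n with
  | 0, n => rw [dF_zero_left, dF_zero_right]
  | m, 0 => rw [dF_zero_left, dF_zero_right]
  | 1, n => rw [dF_one_left, dF_one_right]
  | m, 1 => rw [dF_one_left, dF_one_right]
  | m+2, n+2 =>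
    show dF (m+1) (n+1) + dF m n = dF (n+1) (m+1) + dF n m
    rw [ih (m+1) (by omega), ih m (by omega)]

lemma dF_diag (d : ℕ) : ∀ m : ℕ, 1 ≤ m →
    dF m (d + m) = Nat.fib m * Nat.fib (d + 2) + Nat.fib (m - 1) * Nat.fib d := by
  intro m
  induction m using Nat.strong_induction_on with
  | _ m ih =>
  match m with
  | 0 => intro h; omega
  | 1 => intro _
         show dF 1 (d+1) = _
         rw [dF_one_left]
         simp
  | 2 => intro _
         show dF 1 (d+1) + dF 0 d = _
         rw [dF_one_left, dF_zero_left]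
         simp [Nat.fib_add_two]
  | (k+3) => intro _
             show dF (k+2) (d+(k+2)) + dF (k+1) (d+(k+1)) = _
             rw [ih (k+2) (by omega) (by omega), ih (k+1) (by omega) (by omega)]
             simp [show k+3-1 = (k+1)+1 from rfl, show k+3 = (k+1)+2 from rfl,
               Nat.fib_add_two]
             ring

theorem stmt_0 :
    (∀ m n : ℕ, 1 ≤ min m n →
      dF m n = Nat.fib (min m n) * Nat.fib (Nat.dist m n + 2) +
        Nat.fib (min m n - 1) * Nat.fib (Nat.dist m n)) ∧
    (∀ m : ℕ, dF m 0 = Nat.fib m) ∧ (∀ n : ℕ, dF 0 n = Nat.fib n) := by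
  refine ⟨?_, dF_zero_right, dF_zero_left⟩
  intro m n h
  rcases le_total m n with hle | hle
  · have hn : n = (n - m) + m := by omega
    rw [hn, dF_diag (n - m) m (by omega)]
    congr 1 <;> congr 2 <;> simp [Nat.dist]
  · have hm : m = (m - n) + n := by omega
    rw [dF_symm, hm, dF_diag (m - n) n (by omega)]
    congr 1 <;> congr 2 <;> simp [Nat.dist]
end

section
/- Let F(m,n) be the double-recurrence Fibonacci numbers. Then for all k ∈ ℕ and all 0 ≤ i ≤ k, F(k,i) = F(k,k-i). -/
lemma dF_closed : ∀ n d : ℕ, dF (n + d) n = Nat.fib d * Nat.fib (n+1) + Nat.fib (d+1) * Nat.fib n := by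
  intro n
  induction n using Nat.twoStepInduction with
  | zero => intro d; simp [dF]
  | one =>
    intro d
    have h : dF (1 + d) 1 = Nat.fib (1 + d + 1) := by rw [dF]
    rw [h, show 1+d+1 = d+2 from by ring, Nat.fib_add_two]
    simp [Nat.fib_one, Nat.fib_two]
  | more n ih1 ih2 =>
    intro d
    have h : n + 2 + d = (n + d) + 2 := by ring
    rw [h]
    have h2 : dF (n + d + 2) (n + 2) = dF (n + d + 1) (n + 1) + dF (n + d) n := by
      rw [dF]
    rw [h2]
    have e1 := ih1 d
    have e2 : dF (n + d + 1) (n + 1) = Nat.fib d * Nat.fib (n+2) + Nat.fib (d+1) * Nat.fib (n+1) := by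
      have := ih2 d
      rwa [show n + 1 + d = n + d + 1 from by ring] at this
    rw [e1, e2]
    simp only [show n+2+1 = (n+1)+2 from rfl, show n+1+1 = n+2 from rfl, Nat.fib_add_two]
    ring

theorem stmt_2 : ∀ k i : ℕ, i ≤ k → dF k i = dF k (k - i) := by
  intro k i h
  obtain ⟨d, rfl⟩ : ∃ d, k = i + d := ⟨k - i, by omega⟩
  rw [show i + d - i = d from by omega, dF_closed i d]
  have := dF_closed d i
  rw [show d + i = i + d from by ring] at this
  rw [this]
  ring
end

section
/- For all i ∈ ℕ, 5·∑_{j=0}^{i} F_j · F_{i-j} = i·L_i − F_i, where F_k is the k-th Fibonacci number and L_k is the k-th Lucas number. -/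
/-- Lucas numbers. -/
def luc : ℕ → ℕ
  | 0 => 2
  | 1 => 1
  | n + 2 => luc (n + 1) + luc n

lemma luc_two_fib : ∀ n : ℕ, luc (n + 1) + 2 * luc n = 5 * Nat.fib (n + 1) := by
  intro n
  induction n using Nat.twoStepInduction with
  | zero => decide
  | one => decide
  | more n ih1 ih2 =>
    have h1 : luc (n + 3) = luc (n + 2) + luc (n + 1) := rfl
    have h2 : luc (n + 2) = luc (n + 1) + luc n := rfl
    have h3 : Nat.fib (n + 3) = Nat.fib (n + 1) + Nat.fib (n + 2) := Nat.fib_add_two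
    have e : n + 1 + 1 = n + 2 := rfl
    have e2 : n + 2 + 1 = n + 3 := rfl
    rw [e] at ih2
    rw [e2]
    omega

lemma conv_rec (n : ℕ) :
    ∑ j ∈ Finset.range (n + 3), (Nat.fib j : ℤ) * Nat.fib (n + 2 - j) =
      (∑ j ∈ Finset.range (n + 2), (Nat.fib j : ℤ) * Nat.fib (n + 1 - j)) +
      (∑ j ∈ Finset.range (n + 1), (Nat.fib j : ℤ) * Nat.fib (n - j)) +
      Nat.fib (n + 1) := by
  rw [Finset.sum_range_succ, Finset.sum_range_succ (n := n + 1),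
    Finset.sum_range_succ (f := fun j => (Nat.fib j : ℤ) * Nat.fib (n + 1 - j)) (n := n + 1)]
  have key : ∀ j ∈ Finset.range (n + 1), (Nat.fib j : ℤ) * Nat.fib (n + 2 - j) =
      (Nat.fib j : ℤ) * Nat.fib (n + 1 - j) + (Nat.fib j : ℤ) * Nat.fib (n - j) := by
    intro j hj
    rw [Finset.mem_range] at hj
    have hj' : j ≤ n := by omega
    have e2 : n + 2 - j = (n - j) + 2 := by omega
    have e1 : n + 1 - j = (n - j) + 1 := by omega
    rw [e2, e1, Nat.fib_add_two]
    push_cast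
    ring
  rw [Finset.sum_congr rfl key, Finset.sum_add_distrib]
  simp [Nat.fib_add_two]

theorem stmt_7 : ∀ i : ℕ,
    5 * ∑ j ∈ Finset.range (i + 1), (Nat.fib j : ℤ) * Nat.fib (i - j) =
      i * luc i - Nat.fib i := by
  intro i
  induction i using Nat.twoStepInduction with
  | zero => decide
  | one => decide
  | more n ih1 ih2 =>
    rw [conv_rec]
    have hl : luc (n + 2) = luc (n + 1) + luc n := rfl
    have hf : Nat.fib (n + 2) = Nat.fib n + Nat.fib (n + 1) := Nat.fib_add_two
    have e : n + 1 + 1 = n + 2 := rfl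
    rw [e] at ih2
    have h5 : luc (n + 1) + 2 * luc n = 5 * Nat.fib (n + 1) := luc_two_fib n
    have h5' : (luc (n + 1) : ℤ) + 2 * luc n = 5 * Nat.fib (n + 1) := by exact_mod_cast h5
    push_cast at ih2
    push_cast [hl, hf]
    linear_combination ih1 + ih2 - h5'
end

section
/- Let H(m,n) be a spin function: H(m,n) = H(m-1,n-1) + H(m-2,n-2) for m,n ≥ 2, where H(m,0) = H₁(m), H(m,1) = H₁²(m), H(0,n) = H₂(n), H(1,n) = H₂¹(n), and H₁, H₁², H₂, H₂¹ are sequences satisfying the Fibonacci recurrence x(k+2) = x(k+1) + x(k) with H₁(0) = H₂(0) = a, H₁(1) = H₂(1) = b, H₁²(0) = H₂¹(0) = d, H₁²(1) = H₂¹(1) = c. Then for all m, n with 1 ≤ n ≤ m − 1, H(m,n) = F_n·H₁²(m−n+1) + F_{n−1}·H₁(m−n), where F_k is the k-th Fibonacci number. -/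
theorem stmt_14 (a b c d : ℤ) (H : ℕ → ℕ → ℤ) (H₁ H₁₂ H₂ H₂₁ : ℕ → ℤ)
    (hrec : ∀ m n : ℕ, H (m + 2) (n + 2) = H (m + 1) (n + 1) + H m n)
    (hb1 : ∀ m : ℕ, H m 0 = H₁ m) (hb2 : ∀ m : ℕ, H m 1 = H₁₂ m)
    (hb3 : ∀ n : ℕ, H 0 n = H₂ n) (hb4 : ∀ n : ℕ, H 1 n = H₂₁ n)
    (hr1 : ∀ k : ℕ, H₁ (k + 2) = H₁ (k + 1) + H₁ k)
    (hr2 : ∀ k : ℕ, H₁₂ (k + 2) = H₁₂ (k + 1) + H₁₂ k)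
    (hr3 : ∀ k : ℕ, H₂ (k + 2) = H₂ (k + 1) + H₂ k)
    (hr4 : ∀ k : ℕ, H₂₁ (k + 2) = H₂₁ (k + 1) + H₂₁ k)
    (hv1 : H₁ 0 = a) (hv2 : H₂ 0 = a) (hv3 : H₁ 1 = b) (hv4 : H₂ 1 = b)
    (hv5 : H₁₂ 0 = d) (hv6 : H₂₁ 0 = d) (hv7 : H₁₂ 1 = c) (hv8 : H₂₁ 1 = c) :
    ∀ m n : ℕ, 1 ≤ n → n + 1 ≤ m →
      H m n = Nat.fib n * H₁₂ (m - n + 1) + Nat.fib (n - 1) * H₁ (m - n) := by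
  suffices key : ∀ n m : ℕ, 1 ≤ n → n + 1 ≤ m →
      H m n = Nat.fib n * H₁₂ (m - n + 1) + Nat.fib (n - 1) * H₁ (m - n) by
    intro m n h1 h2; exact key n m h1 h2
  intro n
  induction n using Nat.strong_induction_on with
  | _ n ih =>
    match n with
    | 0 => intro m h; omega
    | 1 =>
      intro m _ hm
      obtain ⟨j, rfl⟩ : ∃ j, m = j + 2 := ⟨m - 2, by omega⟩
      have : j + 2 - 1 = j + 1 := by omega
      rw [this]
      simp [hb2]
    | 2 =>
      intro m _ hm
      obtain ⟨j, rfl⟩ : ∃ j, m = j + 3 := ⟨m - 3, by omega⟩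
      have e1 : j + 3 - 2 = j + 1 := by omega
      rw [e1]
      have := hrec (j + 1) 0
      rw [this, hb2, hb1]
      simp
    | (n + 3) =>
      intro m _ hm
      obtain ⟨j, rfl⟩ : ∃ j, m = n + 4 + j := ⟨m - (n + 4), by omega⟩
      have h1 := ih (n + 2) (by omega) (n + 3 + j) (by omega) (by omega)
      have h2 := ih (n + 1) (by omega) (n + 2 + j) (by omega) (by omega)
      have e1 : n + 3 + j - (n + 2) = j + 1 := by omega
      have e2 : n + 2 + j - (n + 1) = j + 1 := by omega
      have e3 : n + 4 + j - (n + 3) = j + 1 := by omega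
      rw [e1] at h1; rw [e2] at h2
      have hr : H (n + 4 + j) (n + 3) = H (n + 3 + j) (n + 2) + H (n + 2 + j) (n + 1) := by
        have h := hrec (n + 2 + j) (n + 1)
        have e4 : n + 2 + j + 2 = n + 4 + j := by omega
        rw [e4, show n + 2 + j + 1 = n + 3 + j from by omega] at h
        exact h
      rw [hr, h1, h2, e3]
      simp only [Nat.add_sub_cancel]
      push_cast [Nat.fib_add_two]
      ring
end

section
/- For all m ∈ ℕ, ∑_{i=0}^{m} ∑_{j=0}^{i} (F_i + F_j·F_{i−j}) = ∑_{0 ≤ j ≤ i ≤ m} F(i,j), where F(i,j) are the double-recurrence Fibonacci numbers. Equivalently, for 0 ≤ j ≤ i, F(i,j) = F_i + F_j·F_{i−j}. -/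
theorem dF_key : ∀ i j : ℕ, j ≤ i → dF i j = Nat.fib i + Nat.fib j * Nat.fib (i - j)
  | m, 0, _ => by simp [dF]
  | 0, 1, h => by omega
  | m + 1, 1, _ => by
    have : dF (m + 1) 1 = Nat.fib (m + 1 + 1) := by simp [dF]
    rw [this, Nat.fib_add_two]
    simp [Nat.add_comm]
  | 0, n + 2, h => by omega
  | 1, n + 2, h => by omega
  | m + 2, n + 2, h => by
    have h1 := dF_key (m + 1) (n + 1) (by omega)
    have h2 := dF_key m n (by omega)
    have : dF (m + 2) (n + 2) = dF (m + 1) (n + 1) + dF m n := rfl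
    rw [this, h1, h2]
    have e1 : m + 1 - (n + 1) = m - n := by omega
    have e2 : m + 2 - (n + 2) = m - n := by omega
    rw [e1, e2, Nat.fib_add_two, Nat.fib_add_two]
    ring

theorem stmt_17 :
    (∀ m : ℕ,
      ∑ i ∈ Finset.range (m + 1), ∑ j ∈ Finset.range (i + 1),
          ((Nat.fib i : ℕ) + Nat.fib j * Nat.fib (i - j)) =
        ∑ i ∈ Finset.range (m + 1), ∑ j ∈ Finset.range (i + 1), dF i j) ∧
    (∀ i j : ℕ, j ≤ i → dF i j = Nat.fib i + Nat.fib j * Nat.fib (i - j)) := by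
  constructor
  · intro m
    refine Finset.sum_congr rfl fun i _ => Finset.sum_congr rfl fun j hj => ?_
    rw [dF_key i j (by simpa using Nat.lt_succ_iff.mp (Finset.mem_range.mp hj))]
  · exact dF_key
end
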